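/- arXiv:2210.09695 — 4 statements merged into one kernel-verified Lean document; each statement's English description precedes it below -/
import Mathlib

section
/- Let C be a nonempty compact subset of R^d and A, B ∈ R^d with ⟨B, x⟩ > 0 for all x ∈ C. Define ψ(x) = ⟨A, x⟩/⟨B, x⟩ and let t* = inf_{x∈C} ψ(x). Then inf_{x∈C} ⟨A − t*·B, x⟩ = 0. -/
/-- Lemma A.1: for a ratio-of-linear metric ψ = ⟨A,·⟩/⟨B,·⟩ on a compact set C
with ⟨B,x⟩ > 0 on C, and t* = inf ψ, we have inf_{x∈C} ⟨A − t*B, x⟩ = 0. -/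
theorem stmt_1 {d : ℕ} (C : Set (Fin d → ℝ)) (hne : C.Nonempty) (hcomp : IsCompact C)
    (A B : Fin d → ℝ) (hB : ∀ x ∈ C, 0 < ∑ i, B i * x i)
    (ψ : (Fin d → ℝ) → ℝ)
    (hψ : ∀ x, ψ x = (∑ i, A i * x i) / (∑ i, B i * x i))
    (tstar : ℝ) (ht : tstar = sInf (ψ '' C)) :
    sInf ((fun x => ∑ i, (A i - tstar * B i) * x i) '' C) = 0 := by
  -- continuity of ψ on C
  have hcontA : Continuous fun x : Fin d → ℝ => ∑ i, A i * x i :=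
    continuous_finset_sum _ fun i _ => (continuous_const.mul (continuous_apply i))
  have hcontB : Continuous fun x : Fin d → ℝ => ∑ i, B i * x i :=
    continuous_finset_sum _ fun i _ => (continuous_const.mul (continuous_apply i))
  have hψcont : ContinuousOn ψ C := by
    have : ContinuousOn (fun x => (∑ i, A i * x i) / (∑ i, B i * x i)) C :=
      hcontA.continuousOn.div hcontB.continuousOn fun x hx => (hB x hx).ne'
    exact this.congr fun x _ => hψ x
  -- ψ attains its infimum at some x0 ∈ C
  obtain ⟨x0, hx0C, hx0min⟩ := hcomp.exists_isMinOn hne hψcont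
  have htstar : tstar = ψ x0 := by
    rw [ht]
    apply le_antisymm
    · exact csInf_le ⟨ψ x0, fun y ⟨x, hx, hxy⟩ => hxy ▸ hx0min hx⟩ ⟨x0, hx0C, rfl⟩
    · exact le_csInf (hne.image ψ) fun y ⟨x, hx, hxy⟩ => hxy ▸ hx0min hx
  set f : (Fin d → ℝ) → ℝ := fun x => ∑ i, (A i - tstar * B i) * x i with hf
  have hfeq : ∀ x, f x = (∑ i, A i * x i) - tstar * (∑ i, B i * x i) := by
    intro x
    simp only [hf, sub_mul, Finset.sum_sub_distrib, Finset.mul_sum, mul_assoc]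
  have hfnonneg : ∀ x ∈ C, 0 ≤ f x := by
    intro x hx
    have hBx := hB x hx
    have hts : tstar ≤ ψ x := htstar ▸ hx0min hx
    rw [hψ x, le_div_iff₀ hBx] at hts
    rw [hfeq x]
    linarith
  have hfx0 : f x0 = 0 := by
    rw [hfeq x0, htstar, hψ x0, div_mul_cancel₀]
    · ring
    · exact (hB x0 hx0C).ne'
  apply le_antisymm
  · calc sInf (f '' C) ≤ f x0 :=
          csInf_le ⟨0, fun y ⟨x, hx, hxy⟩ => hxy ▸ hfnonneg x hx⟩ ⟨x0, hx0C, rfl⟩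
      _ = 0 := hfx0
  · exact le_csInf (hne.image f) fun y ⟨x, hx, hxy⟩ => hxy ▸ hfnonneg x hx
end

section
/- Let C be a nonempty compact subset of R^d and A, B ∈ R^d with ⟨B, x⟩ > 0 for all x ∈ C. Define ψ(x) = ⟨A, x⟩/⟨B, x⟩, t* = inf_{x∈C} ψ(x), and L* = A − t*·B. If x* ∈ C minimizes ⟨L*, x⟩ over C, then x* minimizes ψ over C, i.e., ψ(x*) = inf_{x∈C} ψ(x). -/
/-- Proposition 3: any minimizer over C of the linear metric defined by
L* = A − t*·B is also a minimizer of the ratio-of-linear metric ψ = ⟨A,·⟩/⟨B,·⟩. -/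
theorem stmt_2 {d : ℕ} (C : Set (Fin d → ℝ)) (hne : C.Nonempty) (hcomp : IsCompact C)
    (A B : Fin d → ℝ) (hB : ∀ x ∈ C, 0 < ∑ i, B i * x i)
    (ψ : (Fin d → ℝ) → ℝ)
    (hψ : ∀ x, ψ x = (∑ i, A i * x i) / (∑ i, B i * x i))
    (tstar : ℝ) (ht : tstar = sInf (ψ '' C))
    (Lstar : Fin d → ℝ) (hL : Lstar = fun i => A i - tstar * B i)
    (xstar : Fin d → ℝ) (hxstar : xstar ∈ C)
    (hmin : ∀ y ∈ C, ∑ i, Lstar i * xstar i ≤ ∑ i, Lstar i * y i) :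
    ψ xstar = sInf (ψ '' C) := by
  have hψeq : ψ = fun x => (∑ i, A i * x i) / (∑ i, B i * x i) := funext hψ
  have hcontA : Continuous fun x : Fin d → ℝ => ∑ i, A i * x i :=
    continuous_finset_sum _ fun i _ => (continuous_const.mul (continuous_apply i))
  have hcontB : Continuous fun x : Fin d → ℝ => ∑ i, B i * x i :=
    continuous_finset_sum _ fun i _ => (continuous_const.mul (continuous_apply i))
  have hcont : ContinuousOn ψ C := by
    rw [hψeq]
    exact ContinuousOn.div hcontA.continuousOn hcontB.continuousOn
      fun x hx => (hB x hx).ne'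
  obtain ⟨x0, hx0C, hx0min⟩ := hcomp.exists_isMinOn hne hcont
  have hbdd : BddBelow (ψ '' C) := ⟨ψ x0, by rintro _ ⟨y, hy, rfl⟩; exact hx0min hy⟩
  have htle : ∀ y ∈ C, tstar ≤ ψ y := fun y hy => ht ▸ csInf_le hbdd ⟨y, hy, rfl⟩
  have ht0 : tstar = ψ x0 := by
    refine le_antisymm (htle x0 hx0C) ?_
    rw [ht]
    exact le_csInf (hne.image ψ) (by rintro _ ⟨y, hy, rfl⟩; exact hx0min hy)
  -- ⟨Lstar, x0⟩ = 0
  have hLval : ∀ y : Fin d → ℝ, ∑ i, Lstar i * y i =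
      (∑ i, A i * y i) - tstar * ∑ i, B i * y i := by
    intro y
    rw [hL, Finset.mul_sum, ← Finset.sum_sub_distrib]
    congr 1; ext i; ring
  have hL0 : ∑ i, Lstar i * x0 i = 0 := by
    rw [hLval, ht0, hψ, div_mul_cancel₀]
    · ring
    · exact (hB x0 hx0C).ne'
  have hle : ∑ i, Lstar i * xstar i ≤ 0 := hL0 ▸ hmin x0 hx0C
  rw [hLval] at hle
  have hψle : ψ xstar ≤ tstar := by
    rw [hψ, div_le_iff₀ (hB xstar hxstar)]
    linarith
  rw [← ht]
  exact le_antisymm hψle (htle xstar hxstar)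
end

section
/- Let E₀ = {x ∈ R^d : (x − c₀)ᵀ H₀⁻¹ (x − c₀) ≤ 1} be an ellipsoid with H₀ positive definite, and let g ∈ R^d be nonzero. Then there exists an ellipsoid E containing E₀ ∩ {x : ⟨g, x − c₀⟩ ≥ 0} with vol(E) ≤ exp(−1/(2d)) · vol(E₀). -/
open Matrix MeasureTheory Pointwise

private lemma ellipsoid_eq_image {d : ℕ} (A : Matrix (Fin d) (Fin d) ℝ) (hA : A.det ≠ 0)
    (c : Fin d → ℝ) :
    {x : Fin d → ℝ | (x - c) ⬝ᵥ ((A * Aᵀ)⁻¹).mulVec (x - c) ≤ 1}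
      = (fun u => c + A.mulVec u) '' {u : Fin d → ℝ | u ⬝ᵥ u ≤ 1} := by
  have hU : IsUnit A.det := hA.isUnit
  have hUT : IsUnit Aᵀ.det := by rwa [det_transpose]
  have hq : ∀ u : Fin d → ℝ,
      (A.mulVec u) ⬝ᵥ ((A * Aᵀ)⁻¹).mulVec (A.mulVec u) = u ⬝ᵥ u := by
    intro u
    rw [Matrix.mul_inv_rev, mulVec_mulVec, Matrix.mul_assoc,
      Matrix.nonsing_inv_mul _ hU, Matrix.mul_one, dotProduct_mulVec,
      ← mulVec_transpose, transpose_nonsing_inv, transpose_transpose,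
      mulVec_mulVec, Matrix.nonsing_inv_mul _ hU, one_mulVec]
  ext x
  simp only [Set.mem_setOf_eq, Set.mem_image]
  constructor
  · intro hx
    refine ⟨A⁻¹.mulVec (x - c), ?_, ?_⟩
    · have hxc : A.mulVec (A⁻¹.mulVec (x - c)) = x - c := by
        rw [mulVec_mulVec, Matrix.mul_nonsing_inv _ hU, one_mulVec]
      have h2 := hq (A⁻¹.mulVec (x - c))
      rw [hxc] at h2
      simpa only [Set.mem_setOf_eq, h2] using hx
    · rw [mulVec_mulVec, Matrix.mul_nonsing_inv _ hU, one_mulVec, add_sub_cancel]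
  · rintro ⟨u, hu, rfl⟩
    simpa only [add_sub_cancel_left, hq] using hu

private lemma volume_image_affine {d : ℕ} (A : Matrix (Fin d) (Fin d) ℝ) (c : Fin d → ℝ)
    (s : Set (Fin d → ℝ)) :
    volume ((fun u => c + A.mulVec u) '' s)
      = ENNReal.ofReal |A.det| * volume s := by
  have h1 : (fun u => c + A.mulVec u) '' s = c +ᵥ (A.mulVecLin '' s) := by
    rw [← Set.image_vadd, ← Set.image_comp]
    rfl
  rw [h1, measure_vadd, Measure.addHaar_image_linearMap]
  congr 2
  rw [show A.mulVecLin = Matrix.toLin' A from rfl, LinearMap.det_toLin']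

private lemma core_log {x : ℝ} (hx0 : 0 < x) (hx3 : x ≤ 1/3) :
    x^2 ≤ (1+x) * Real.log (1+x) + (1-x) * Real.log (1-x) := by
  have hax : |x| < 1 := by rw [abs_of_pos hx0]; linarith
  have hax' : |(-x)| < 1 := by rwa [abs_neg]
  have h1 := Real.abs_log_sub_add_sum_range_le hax' 6
  have h2 := Real.abs_log_sub_add_sum_range_le hax 6
  rw [abs_neg, abs_of_pos hx0] at h1
  rw [abs_of_pos hx0] at h2
  simp only [Finset.sum_range_succ, Finset.sum_range_zero, sub_neg_eq_add] at h1 h2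
  norm_num at h1 h2
  rw [abs_le] at h1 h2
  have he : x^7 / (1-x) ≤ (3/2) * x^7 := by
    rw [div_le_iff₀ (by linarith)]
    nlinarith [pow_pos hx0 7]
  have hp7 : (0:ℝ) < x^7 := pow_pos hx0 7
  have hl1 : Real.log (1+x) ≥ x - x^2/2 + x^3/3 - x^4/4 + x^5/5 - x^6/6 - (3/2)*x^7 := by
    nlinarith [h1.1, h1.2]
  have hl2 : Real.log (1-x) ≥ -x - x^2/2 - x^3/3 - x^4/4 - x^5/5 - x^6/6 - (3/2)*x^7 := by
    nlinarith [h2.1, h2.2]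
  have m1 : (1+x) * Real.log (1+x)
      ≥ (1+x) * (x - x^2/2 + x^3/3 - x^4/4 + x^5/5 - x^6/6 - (3/2)*x^7) :=
    mul_le_mul_of_nonneg_left hl1 (by linarith)
  have m2 : (1-x) * Real.log (1-x)
      ≥ (1-x) * (-x - x^2/2 - x^3/3 - x^4/4 - x^5/5 - x^6/6 - (3/2)*x^7) :=
    mul_le_mul_of_nonneg_left hl2 (by linarith)
  nlinarith [m1, m2, pow_pos hx0 4, pow_pos hx0 6, pow_pos hx0 8,
    mul_pos (mul_pos hx0 hx0) hx0, sq_nonneg x, pow_nonneg hx0.le 4,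
    mul_le_of_le_one_left (pow_nonneg hx0.le 7) (by linarith : x ≤ 1)]

private lemma key_ineq_big (k : ℕ) (hk : 2 ≤ k) :
    ((k+1 : ℝ) / (k+2)) * ((k+1 : ℝ) / Real.sqrt ((k+1:ℝ)^2 - 1)) ^ k
      ≤ Real.exp (-1 / (2 * (k+1))) := by
  set D : ℝ := (k:ℝ) + 1 with hDdef
  have hk2 : (2:ℝ) ≤ (k:ℝ) := by exact_mod_cast hk
  have hD : (3:ℝ) ≤ D := by simp [hDdef]; linarith
  have hD0 : (0:ℝ) < D := by linarith
  have hDm : (0:ℝ) < D - 1 := by linarith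
  have hDp : (0:ℝ) < D + 1 := by linarith
  have hD2 : (0:ℝ) < D^2 - 1 := by nlinarith
  have hs : (0:ℝ) < Real.sqrt (D^2 - 1) := Real.sqrt_pos.mpr hD2
  have hgoalform : ((k+1 : ℝ) / (k+2)) = D / (D+1) := by rw [hDdef]; ring_nf
  have hb0 : (0:ℝ) < D / Real.sqrt (D^2-1) := div_pos hD0 hs
  have ha0 : (0:ℝ) < D / (D+1) := div_pos hD0 hDp
  set u : ℝ := Real.log (D+1) - Real.log D with hu
  set v : ℝ := Real.log (D-1) - Real.log D with hv
  have hlogb : Real.log (D / Real.sqrt (D^2-1)) = -(1/2) * (u + v) := by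
    rw [Real.log_div hD0.ne' hs.ne', Real.log_sqrt hD2.le,
      show D^2 - 1 = (D-1)*(D+1) by ring, Real.log_mul hDm.ne' hDp.ne', hu, hv]
    ring
  have hloga : Real.log (D / (D+1)) = -u := by
    rw [Real.log_div hD0.ne' hDp.ne', hu]; ring
  have hx0 : (0:ℝ) < 1/D := by positivity
  have hx3 : (1:ℝ)/D ≤ 1/3 := by
    rw [div_le_div_iff₀ hD0 (by norm_num)]; linarith
  have core := core_log hx0 hx3
  have ha1 : Real.log (1+1/D) = u := by
    rw [show (1+1/D : ℝ) = (D+1)/D by field_simp, Real.log_div hDp.ne' hD0.ne', hu]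
  have ha2 : Real.log (1-1/D) = v := by
    rw [show (1-1/D : ℝ) = (D-1)/D by field_simp, Real.log_div hDm.ne' hD0.ne', hv]
  rw [ha1, ha2] at core
  have core3 : 1/D ≤ (D+1)*u + (D-1)*v := by
    have h := mul_le_mul_of_nonneg_left core hD0.le
    have e1 : D * (1/D)^2 = 1/D := by
      field_simp
    have e2 : D * ((1+1/D)*u + (1-1/D)*v) = (D+1)*u + (D-1)*v := by
      field_simp
    rw [e1, e2] at h
    exact h
  have hpos : (0:ℝ) < (D/(D+1)) * (D / Real.sqrt (D^2-1)) ^ k := by positivity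
  rw [hgoalform, show (-1 / (2*((k:ℝ)+1)) : ℝ) = -1/(2*D) by rw [hDdef],
    ← Real.exp_log hpos]
  apply Real.exp_le_exp.mpr
  rw [Real.log_mul ha0.ne' (pow_ne_zero _ hb0.ne'), Real.log_pow, hloga, hlogb]
  have hkD : (k:ℝ) = D - 1 := by rw [hDdef]; ring
  rw [hkD]
  have : -1/(2*D) = -(1/(2*D)) := by ring
  rw [this]
  have hee : (2 + (k:ℝ)*2)⁻¹ = (1/2) * (1+(k:ℝ))⁻¹ := by
    rw [show (2 + (k:ℝ)*2) = 2*(1+(k:ℝ)) by ring, mul_inv]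
    ring
  ring_nf
  ring_nf at core3
  linarith [hee]

private lemma key_ineq (k : ℕ) :
    ((k+1 : ℝ) / (k+2)) * ((k+1 : ℝ) / Real.sqrt ((k+1:ℝ)^2 - 1)) ^ k
      ≤ Real.exp (-1 / (2 * (k+1))) := by
  match k with
  | 0 =>
    norm_num
    nlinarith [Real.add_one_le_exp (-1/2 : ℝ)]
  | 1 =>
    norm_num
    have h3 : Real.sqrt 3 > 0 := Real.sqrt_pos.mpr (by norm_num)
    have h3' : Real.sqrt 3 ^ 2 = 3 := Real.sq_sqrt (by norm_num)
    have e1 : Real.exp 1 < 2.7182818286 := Real.exp_one_lt_d9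
    have e2sq : Real.exp (1/2) ^ 2 = Real.exp 1 := by
      rw [← Real.exp_nat_mul]; norm_num
    have e2pos : (0:ℝ) < Real.exp (1/2) := Real.exp_pos _
    have e2le : Real.exp (1/2) ≤ 27/16 := by nlinarith
    have enegsq : Real.exp (-1/4) ^ 2 * Real.exp (1/2) = 1 := by
      rw [← Real.exp_nat_mul, ← Real.exp_add]; norm_num
    have enegpos : (0:ℝ) < Real.exp (-1/4) := Real.exp_pos _
    rw [div_mul_div_comm, div_le_iff₀ (by positivity)]
    nlinarith [sq_nonneg (Real.exp (-1/4) * (3 * Real.sqrt 3) - 4), mul_pos enegpos h3]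
  | (n+2) => exact key_ineq_big (n+2) (by omega)

private lemma EE_idem {k : ℕ} (e : Fin (k+1) → ℝ) (he : e ⬝ᵥ e = 1) :
    vecMulVec e e * vecMulVec e e = vecMulVec e e := by
  ext i j
  simp only [mul_apply, vecMulVec_apply]
  have : ∑ l, e i * e l * (e l * e j) = (e i * e j) * ∑ l, e l * e l := by
    rw [Finset.mul_sum]; congr 1; ext l; ring
  rw [this, show ∑ l, e l * e l = 1 from he, mul_one]

private lemma E_mulVec {k : ℕ} (e v : Fin (k+1) → ℝ) :
    (vecMulVec e e) *ᵥ v = (e ⬝ᵥ v) • e := by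
  ext i
  simp only [mulVec, vecMulVec_apply, Pi.smul_apply, smul_eq_mul, dotProduct]
  rw [Finset.sum_mul]
  exact Finset.sum_congr rfl fun l _ => by ring

private lemma E_one (e : Fin 1 → ℝ) (he : e ⬝ᵥ e = 1) : vecMulVec e e = 1 := by
  have he' : e 0 * e 0 = 1 := by simpa [dotProduct, Fin.sum_univ_one] using he
  ext i j
  rw [Subsingleton.elim i 0, Subsingleton.elim j 0]
  simp [vecMulVec_apply, one_apply, he']

private lemma LL'_eq_one {k : ℕ} (e : Fin (k+1) → ℝ) (he : e ⬝ᵥ e = 1) {a b : ℝ} (ha : a ≠ 0)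
    (hb : k = 0 ∨ b ≠ 0) :
    (a • vecMulVec e e + b • (1 - vecMulVec e e)) *
      (a⁻¹ • vecMulVec e e + b⁻¹ • (1 - vecMulVec e e)) = 1 := by
  set E := vecMulVec e e with hE
  have hEE : E * E = E := EE_idem e he
  have h1 : E * (1 - E) = 0 := by rw [Matrix.mul_sub, Matrix.mul_one, hEE, sub_self]
  have h2 : (1 - E) * E = 0 := by rw [Matrix.sub_mul, Matrix.one_mul, hEE, sub_self]
  have h3 : (1 - E) * (1 - E) = 1 - E := by
    rw [Matrix.sub_mul, Matrix.one_mul, Matrix.mul_sub, Matrix.mul_one, hEE]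
    abel
  have expand : (a • E + b • (1 - E)) * (a⁻¹ • E + b⁻¹ • (1 - E)) =
      (a⁻¹*a) • (E * E) + (b⁻¹*a) • (E * (1-E)) + (a⁻¹*b) • ((1-E) * E)
        + (b⁻¹*b) • ((1-E) * (1-E)) := by
    rw [Matrix.add_mul, Matrix.mul_add, Matrix.mul_add]
    simp only [smul_mul_assoc, mul_smul_comm, smul_smul]
    abel
  rw [expand, h1, h2, h3, hEE, smul_zero, smul_zero, add_zero, add_zero,
    inv_mul_cancel₀ ha, one_smul]
  rcases hb with hb | hb
  · subst hb
    rw [hE, E_one e he]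
    simp
  · rw [inv_mul_cancel₀ hb, one_smul, add_sub_cancel]

private lemma detL_eq {k : ℕ} (e : Fin (k+1) → ℝ) (he : e ⬝ᵥ e = 1) {a b : ℝ}
    (hb : k = 0 ∨ b ≠ 0) :
    (a • vecMulVec e e + b • (1 - vecMulVec e e)).det = a * b ^ k := by
  set E := vecMulVec e e with hE
  have halt : a • E + b • (1 - E)
      = b • (1 : Matrix (Fin (k+1)) (Fin (k+1)) ℝ) + (a - b) • E := by
    rw [smul_sub, sub_smul]
    abel
  rcases hb with hb | hb
  · subst hb
    rw [halt, hE, E_one e he, ← add_smul, det_smul]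
    simp
  · have hfac : a • E + b • (1 - E)
        = b • ((1 : Matrix (Fin (k+1)) (Fin (k+1)) ℝ) + ((a-b) * b⁻¹) • E) := by
      rw [halt, smul_add, smul_smul]
      congr 2
      field_simp
    have hdet1 : ((1 : Matrix (Fin (k+1)) (Fin (k+1)) ℝ) + ((a-b) * b⁻¹) • E).det
        = 1 + (a-b) * b⁻¹ := by
      have : ((a-b) * b⁻¹) • E = vecMulVec (((a-b) * b⁻¹) • e) e := by
        ext i j; simp [vecMulVec_apply, hE]; ring
      rw [this, vecMulVec_eq (Fin 1), det_one_add_replicateCol_mul_replicateRow]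
      simp [dotProduct_smul, he]
    rw [hfac, det_smul, hdet1]
    have : b ^ (k+1) = b * b^k := by ring
    rw [Fintype.card_fin, this]
    field_simp
    ring

private lemma posDef_mul_transpose {d : ℕ} (M : Matrix (Fin d) (Fin d) ℝ) (hM : M.det ≠ 0) :
    (M * Mᵀ).PosDef := by
  refine Matrix.PosDef.of_dotProduct_mulVec_pos ?_ ?_
  · show (M * Mᵀ)ᴴ = M * Mᵀ
    rw [conjTranspose_eq_transpose_of_trivial, transpose_mul, transpose_transpose]
  · intro x hx
    have hinj : Function.Injective (Mᵀ.mulVec) := by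
      rw [mulVec_injective_iff_isUnit]
      rw [isUnit_iff_isUnit_det, det_transpose]
      exact hM.isUnit
    have hx' : Mᵀ *ᵥ x ≠ 0 := fun h => hx (hinj (by simpa using h))
    have hrw : star x ⬝ᵥ (M * Mᵀ) *ᵥ x = (Mᵀ *ᵥ x) ⬝ᵥ (Mᵀ *ᵥ x) := by
      rw [star_trivial, ← mulVec_mulVec, dotProduct_mulVec, ← mulVec_transpose]
    rw [hrw]
    rcases (dotProduct_self_eq_zero (v := Mᵀ *ᵥ x)).ne.mpr hx' |>.lt_or_gt with h | h
    · exact absurd h (not_lt.mpr (Finset.sum_nonneg fun i _ => mul_self_nonneg _))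
    · exact h

set_option maxHeartbeats 1000000 in
/-- Lemma B.3 (John–Löwner ellipsoid volume reduction): there is an ellipsoid
containing the half-ellipsoid E₀ ∩ {x : ⟨g, x − c₀⟩ ≥ 0} whose volume is at
most exp(−1/(2d)) times the volume of E₀. -/
theorem stmt_10 {d : ℕ} (H₀ : Matrix (Fin d) (Fin d) ℝ) (hH₀ : H₀.PosDef)
    (c₀ g : Fin d → ℝ) (hg : g ≠ 0) :
    ∃ (H : Matrix (Fin d) (Fin d) ℝ) (c : Fin d → ℝ), H.PosDef ∧
      ({x : Fin d → ℝ | (x - c₀) ⬝ᵥ H₀⁻¹.mulVec (x - c₀) ≤ 1} ∩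
          {x : Fin d → ℝ | 0 ≤ g ⬝ᵥ (x - c₀)})
        ⊆ {x : Fin d → ℝ | (x - c) ⬝ᵥ H⁻¹.mulVec (x - c) ≤ 1} ∧
      volume {x : Fin d → ℝ | (x - c) ⬝ᵥ H⁻¹.mulVec (x - c) ≤ 1}
        ≤ ENNReal.ofReal (Real.exp (-1 / (2 * d))) *
            volume {x : Fin d → ℝ | (x - c₀) ⬝ᵥ H₀⁻¹.mulVec (x - c₀) ≤ 1} := by
  obtain ⟨k, rfl⟩ : ∃ k, d = k + 1 := by
    cases d with
    | zero => exact absurd (Subsingleton.elim g 0) hg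
    | succ k => exact ⟨k, rfl⟩
  -- the square root of H₀
  open scoped MatrixOrder in set B := CFC.sqrt H₀ with hBdef
  open scoped MatrixOrder in have hBpsd : B.PosSemidef := (CFC.sqrt_nonneg H₀).posSemidef
  have hBsymm : Bᵀ = B := by
    have h : Bᴴ = B := hBpsd.isHermitian
    rwa [conjTranspose_eq_transpose_of_trivial] at h
  have hBB : B * Bᵀ = H₀ := by rw [hBsymm]; open scoped MatrixOrder in exact CFC.sqrt_mul_sqrt_self H₀ hH₀.posSemidef.nonneg
  have hBdet : B.det ≠ 0 := by
    intro h
    have : H₀.det = 0 := by rw [← hBB, det_mul, h, zero_mul]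
    exact hH₀.det_pos.ne' this
  -- the direction vector
  set g' := B *ᵥ g with hg'def
  have hg'0 : g' ≠ 0 := by
    intro h
    apply hg
    have hinj : Function.Injective (B.mulVec) :=
      mulVec_injective_iff_isUnit.mpr ((isUnit_iff_isUnit_det _).mpr hBdet.isUnit)
    exact hinj (by simpa using h)
  have hgg : 0 < g' ⬝ᵥ g' := by
    rcases (dotProduct_self_eq_zero (v := g')).ne.mpr hg'0 |>.lt_or_gt with h | h
    · exact absurd h (not_lt.mpr (Finset.sum_nonneg fun i _ => mul_self_nonneg _))
    · exact h
  set t := Real.sqrt (g' ⬝ᵥ g') with htdef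
  have ht : 0 < t := Real.sqrt_pos.mpr hgg
  have ht2 : t ^ 2 = g' ⬝ᵥ g' := Real.sq_sqrt hgg.le
  set e := t⁻¹ • g' with hedef
  have he : e ⬝ᵥ e = 1 := by
    rw [hedef, smul_dotProduct, dotProduct_smul, smul_eq_mul, smul_eq_mul, ← ht2]
    field_simp
  -- scalar constants
  set D : ℝ := (k : ℝ) + 1 with hDdef
  have hD1 : (1:ℝ) ≤ D := by
    rw [hDdef]
    have : (0:ℝ) ≤ (k:ℝ) := Nat.cast_nonneg k
    linarith
  have hD0 : (0:ℝ) < D := by linarith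
  have hDp : (0:ℝ) < D + 1 := by linarith
  set a : ℝ := D / (D + 1) with hadef
  set b : ℝ := D / Real.sqrt (D^2 - 1) with hbdef
  have ha0 : 0 < a := div_pos hD0 hDp
  have hb0 : 0 ≤ b := div_nonneg hD0.le (Real.sqrt_nonneg _)
  have hbcase : k = 0 ∨ b ≠ 0 := by
    rcases Nat.eq_zero_or_pos k with hk | hk
    · exact Or.inl hk
    · right
      have hk1 : (1:ℝ) ≤ (k:ℝ) := by exact_mod_cast hk
      have : (0:ℝ) < D^2 - 1 := by rw [hDdef]; nlinarith
      exact (div_pos hD0 (Real.sqrt_pos.mpr this)).ne'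
  have hbinv : (b⁻¹)^2 = (D^2 - 1) / D^2 := by
    rcases Nat.eq_zero_or_pos k with hk | hk
    · subst hk
      simp [hbdef, hDdef]
    · have hk1 : (1:ℝ) ≤ (k:ℝ) := by exact_mod_cast hk
      have h2 : (0:ℝ) < D^2 - 1 := by rw [hDdef]; nlinarith
      rw [hbdef, inv_div, div_pow, Real.sq_sqrt h2.le]
  -- the matrices
  set E := vecMulVec e e with hEdef
  set L := a • E + b • (1 - E) with hLdef
  set L' := a⁻¹ • E + b⁻¹ • (1 - E) with hL'def
  have hLL' : L * L' = 1 := LL'_eq_one e he ha0.ne' hbcase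
  have hdetL : L.det = a * b ^ k := detL_eq e he hbcase
  set A := B * L with hAdef
  have habk : 0 < a * b ^ k ∨ 0 ≤ a * b ^ k := by
    rcases hbcase with hk | hb
    · subst hk; left; simpa using ha0
    · left; exact mul_pos ha0 (pow_pos (lt_of_le_of_ne hb0 (Ne.symm hb)) k)
  have habk' : 0 < a * b ^ k := by
    rcases hbcase with hk | hb
    · subst hk; simpa using ha0
    · exact mul_pos ha0 (pow_pos (lt_of_le_of_ne hb0 (Ne.symm hb)) k)
  have hAdet : A.det ≠ 0 := by
    rw [hAdef, det_mul, hdetL]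
    exact mul_ne_zero hBdet habk'.ne'
  set κ : ℝ := 1 / (D + 1) with hκdef
  set c : Fin (k+1) → ℝ := c₀ + B *ᵥ (κ • e) with hcdef
  clear_value B g' t e D a b E L L' A κ c
  refine ⟨A * Aᵀ, c, posDef_mul_transpose A hAdet, ?_, ?_⟩
  · -- containment
    have hset0 : {x : Fin (k+1) → ℝ | (x - c₀) ⬝ᵥ H₀⁻¹.mulVec (x - c₀) ≤ 1}
        = (fun u => c₀ + B.mulVec u) '' {u : Fin (k+1) → ℝ | u ⬝ᵥ u ≤ 1} := by
      have h := ellipsoid_eq_image B hBdet c₀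
      rwa [hBB] at h
    have hset1 : {x : Fin (k+1) → ℝ | (x - c) ⬝ᵥ ((A * Aᵀ)⁻¹).mulVec (x - c) ≤ 1}
        = (fun u => c + A.mulVec u) '' {u : Fin (k+1) → ℝ | u ⬝ᵥ u ≤ 1} :=
      ellipsoid_eq_image A hAdet c
    rintro x ⟨hx0, hxg⟩
    rw [Set.mem_setOf_eq] at hx0 hxg
    have hx0' : x ∈ {x : Fin (k+1) → ℝ | (x - c₀) ⬝ᵥ H₀⁻¹.mulVec (x - c₀) ≤ 1} := hx0
    rw [hset0] at hx0'
    obtain ⟨u, hu, rfl⟩ := hx0'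
    rw [Set.mem_setOf_eq] at hu
    rw [add_sub_cancel_left] at hxg
    have hsu : 0 ≤ g' ⬝ᵥ u := by
      rw [hg'def, ← hBsymm, mulVec_transpose, ← dotProduct_mulVec]
      exact hxg
    set s : ℝ := e ⬝ᵥ u with hsdef
    clear_value s
    have hs0 : 0 ≤ s := by
      rw [hsdef, hedef, smul_dotProduct, smul_eq_mul]
      exact mul_nonneg (inv_nonneg.mpr ht.le) hsu
    -- the witness
    set w : Fin (k+1) → ℝ := (a⁻¹ * (s - κ)) • e + b⁻¹ • (u - s • e) with hwdef
    clear_value w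
    have hEv : ∀ v, E *ᵥ v = (e ⬝ᵥ v) • e := fun v => by rw [hEdef]; exact E_mulVec e v
    have hL'v : L' *ᵥ (u - κ • e) = w := by
      rw [hL'def, add_mulVec, smul_mulVec, smul_mulVec, sub_mulVec,
        one_mulVec, hEv]
      have hd1 : e ⬝ᵥ (u - κ • e) = s - κ := by
        rw [dotProduct_sub, dotProduct_smul, he, smul_eq_mul, mul_one, hsdef]
      rw [hd1, hwdef, smul_smul]
      congr 1
      rw [sub_sub, ← add_smul]
      congr 2
      ring
    have hmem : c₀ + B *ᵥ u ∈
        {x : Fin (k+1) → ℝ | (x - c) ⬝ᵥ ((A * Aᵀ)⁻¹).mulVec (x - c) ≤ 1} := by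
      rw [hset1]
      refine ⟨w, ?_, ?_⟩
      · -- w ⬝ᵥ w ≤ 1
        rw [Set.mem_setOf_eq]
        have horth : e ⬝ᵥ (u - s • e) = 0 := by
          rw [dotProduct_sub, dotProduct_smul, he, smul_eq_mul, mul_one, hsdef, sub_self]
        have horth' : (u - s • e) ⬝ᵥ e = 0 := by rw [dotProduct_comm]; exact horth
        have hmm : (u - s • e) ⬝ᵥ (u - s • e) = u ⬝ᵥ u - s^2 := by
          rw [dotProduct_sub, sub_dotProduct, sub_dotProduct, dotProduct_smul,
            smul_dotProduct, smul_dotProduct, dotProduct_smul, he, dotProduct_comm u e,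
            ← hsdef]
          simp only [smul_eq_mul]
          ring
        have hquad : w ⬝ᵥ w = (a⁻¹ * (s - κ))^2 + (b⁻¹)^2 * (u ⬝ᵥ u - s^2) := by
          rw [hwdef, dotProduct_add, add_dotProduct, add_dotProduct,
            smul_dotProduct, smul_dotProduct, smul_dotProduct, smul_dotProduct,
            dotProduct_smul, dotProduct_smul, dotProduct_smul, dotProduct_smul,
            he, horth, horth', hmm]
          simp only [smul_eq_mul]
          ring
        have hmm0 : 0 ≤ (u - s • e) ⬝ᵥ (u - s • e) :=
          Finset.sum_nonneg fun i _ => mul_self_nonneg _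
        have hs2 : s^2 ≤ u ⬝ᵥ u := by rw [hmm] at hmm0; linarith
        have hs1 : s ≤ 1 := by nlinarith
        rw [hquad, hbinv, hadef, hκdef, inv_div]
        have hexp : ((D+1)/D * (s - 1/(D+1)))^2 = ((D+1)*s - 1)^2 / D^2 := by
          field_simp
        rw [hexp]
        have t1 : 2*(D+1)*s*(s-1) ≤ 0 := by
          nlinarith [mul_nonneg (mul_nonneg hDp.le hs0) (sub_nonneg.mpr hs1)]
        have t2 : (D^2-1)*(u ⬝ᵥ u - 1) ≤ 0 := by
          have h27 : (0:ℝ) ≤ D^2 - 1 := by nlinarith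
          nlinarith [mul_nonneg h27 (sub_nonneg.mpr hu)]
        have key0 : ((D+1)*s - 1)^2 + (D^2-1)*(u ⬝ᵥ u - s^2) ≤ D^2 := by nlinarith
        rw [div_mul_eq_mul_div, ← add_div, div_le_one (by positivity)]
        exact key0
      · -- the affine identity
        show c + A *ᵥ w = c₀ + B *ᵥ u
        have h1 : A *ᵥ w = B *ᵥ (u - κ • e) := by
          rw [hAdef, ← hL'v, mulVec_mulVec, Matrix.mul_assoc, hLL', Matrix.mul_one]
        rw [h1, hcdef, mulVec_sub]
        abel
    exact hmem
  · -- volume bound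
    have hset0 : {x : Fin (k+1) → ℝ | (x - c₀) ⬝ᵥ H₀⁻¹.mulVec (x - c₀) ≤ 1}
        = (fun u => c₀ + B.mulVec u) '' {u : Fin (k+1) → ℝ | u ⬝ᵥ u ≤ 1} := by
      have h := ellipsoid_eq_image B hBdet c₀
      rwa [hBB] at h
    have hset1 : {x : Fin (k+1) → ℝ | (x - c) ⬝ᵥ ((A * Aᵀ)⁻¹).mulVec (x - c) ≤ 1}
        = (fun u => c + A.mulVec u) '' {u : Fin (k+1) → ℝ | u ⬝ᵥ u ≤ 1} :=
      ellipsoid_eq_image A hAdet c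
    rw [hset1, hset0, volume_image_affine, volume_image_affine]
    have hdetA : |A.det| = |B.det| * (a * b^k) := by
      rw [hAdef, det_mul, hdetL, abs_mul, abs_of_pos habk']
    have hkey : a * b ^ k ≤ Real.exp (-1 / (2 * ((k:ℝ)+1))) := by
      rw [hadef, hbdef, hDdef, show ((k:ℝ)+1)+1 = (k:ℝ)+2 from by ring]
      exact key_ineq k
    have hcast : ((k+1:ℕ):ℝ) = (k:ℝ)+1 := by push_cast; ring
    rw [hdetA, ENNReal.ofReal_mul (abs_nonneg _), hcast,
      mul_comm (ENNReal.ofReal |B.det|) (ENNReal.ofReal (a * b^k)), mul_assoc]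
    exact mul_le_mul_left (ENNReal.ofReal_le_ofReal hkey) _
end

section
/- Let η, η̂ : X → Δ_n be measurable maps into the probability simplex, μ a probability distribution on X, and L ∈ [0,1]^{n×n} a loss matrix with ‖L‖_∞ ≤ 1. Define ĝ(x) ∈ argmin_j Σ_i η̂_i(x) L_{ij} and h*(x) ∈ argmin_j Σ_i η_i(x) L_{ij}. Then E_X[Σ_i η_i(X) L_{i,ĝ(X)}] ≤ E_X[Σ_i η_i(X) L_{i,h*(X)}] + E_X[‖η̂(X) − η(X)‖₁]. -/
open MeasureTheory

/-- Theorem 12, first part (regret bound for the plug-in LMO): the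
cost-sensitive regret of the plug-in classifier built from an estimated class
probability function η̂ is bounded by the expected ℓ₁ estimation error. -/
theorem stmt_14 {X : Type*} [MeasurableSpace X] {n : ℕ}
    (μ : Measure X) [IsProbabilityMeasure μ]
    (η ηhat : X → (Fin n → ℝ))
    (hη : Measurable η) (hηhat : Measurable ηhat)
    (hηsim : ∀ x, η x ∈ stdSimplex ℝ (Fin n))
    (hηhatsim : ∀ x, ηhat x ∈ stdSimplex ℝ (Fin n))
    (L : Fin n → Fin n → ℝ) (hLrange : ∀ i j, L i j ∈ Set.Icc (0:ℝ) 1)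
    (ghat hstar : X → Fin n) (hghat : Measurable ghat) (hhstar : Measurable hstar)
    (hghatmin : ∀ x, ∀ j, ∑ i, ηhat x i * L i (ghat x) ≤ ∑ i, ηhat x i * L i j)
    (hhstarmin : ∀ x, ∀ j, ∑ i, η x i * L i (hstar x) ≤ ∑ i, η x i * L i j) :
    (∫ x, ∑ i, η x i * L i (ghat x) ∂μ) ≤
      (∫ x, ∑ i, η x i * L i (hstar x) ∂μ) +
        ∫ x, ∑ i, |ηhat x i - η x i| ∂μ := by
  -- integrability helper
  have integ : ∀ (f : X → ℝ) (C : ℝ), Measurable f → (∀ x, |f x| ≤ C) →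
      Integrable f μ := by
    intro f C hf hb
    exact ⟨hf.aestronglyMeasurable,
      MeasureTheory.HasFiniteIntegral.of_bounded (C := C) (ae_of_all _ hb)⟩
  have hηb : ∀ x i, |η x i| ≤ 1 := by
    intro x i
    have h := hηsim x
    have h0 : 0 ≤ η x i := h.1 i
    have h1 : η x i ≤ 1 := by
      have := Finset.single_le_sum (f := fun i => η x i) (fun i _ => h.1 i)
        (Finset.mem_univ i)
      rw [h.2] at this; exact this
    rw [abs_of_nonneg h0]; exact h1
  have hηhatb : ∀ x i, |ηhat x i| ≤ 1 := by
    intro x i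
    have h := hηhatsim x
    have h0 : 0 ≤ ηhat x i := h.1 i
    have h1 : ηhat x i ≤ 1 := by
      have := Finset.single_le_sum (f := fun i => ηhat x i) (fun i _ => h.1 i)
        (Finset.mem_univ i)
      rw [h.2] at this; exact this
    rw [abs_of_nonneg h0]; exact h1
  have hLb : ∀ i j, |L i j| ≤ 1 := by
    intro i j
    rw [abs_of_nonneg (hLrange i j).1]; exact (hLrange i j).2
  -- measurability / integrability of the three integrands
  have mf : ∀ (g : X → Fin n), Measurable g →
      Measurable (fun x => ∑ i, η x i * L i (g x)) := by
    intro g hg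
    apply Finset.measurable_sum
    intro i _
    exact ((measurable_pi_apply i).comp hη).mul ((measurable_of_countable _).comp hg)
  have bnd : ∀ (g : X → Fin n), ∀ x, |∑ i, η x i * L i (g x)| ≤ (n : ℝ) := by
    intro g x
    calc |∑ i, η x i * L i (g x)| ≤ ∑ i, |η x i * L i (g x)| :=
          Finset.abs_sum_le_sum_abs _ _
      _ ≤ ∑ _i : Fin n, (1 : ℝ) := by
          apply Finset.sum_le_sum
          intro i _
          rw [abs_mul]
          exact mul_le_one₀ (hηb x i) (abs_nonneg _) (hLb i (g x))
      _ = (n : ℝ) := by simp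
  have int1 : Integrable (fun x => ∑ i, η x i * L i (ghat x)) μ :=
    integ _ (n : ℝ) (mf ghat hghat) (bnd ghat)
  have int2 : Integrable (fun x => ∑ i, η x i * L i (hstar x)) μ :=
    integ _ (n : ℝ) (mf hstar hhstar) (bnd hstar)
  have int3 : Integrable (fun x => ∑ i, |ηhat x i - η x i|) μ := by
    apply integ _ (2 * n : ℝ)
    · apply Finset.measurable_sum
      intro i _
      exact (((measurable_pi_apply i).comp hηhat).sub
        ((measurable_pi_apply i).comp hη)).abs
    · intro x
      have h0 : 0 ≤ ∑ i, |ηhat x i - η x i| :=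
        Finset.sum_nonneg fun i _ => abs_nonneg _
      rw [abs_of_nonneg h0]
      calc ∑ i, |ηhat x i - η x i| ≤ ∑ _i : Fin n, (2 : ℝ) := by
            apply Finset.sum_le_sum
            intro i _
            calc |ηhat x i - η x i| ≤ |ηhat x i| + |η x i| := abs_sub _ _
              _ ≤ 1 + 1 := add_le_add (hηhatb x i) (hηb x i)
              _ = 2 := by norm_num
        _ = 2 * n := by simp [mul_comm]
  -- pointwise key inequality
  have key : ∀ x, ∑ i, η x i * L i (ghat x) ≤
      ∑ i, η x i * L i (hstar x) + ∑ i, |ηhat x i - η x i| := by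
    intro x
    have hmin := hghatmin x (hstar x)
    have e1 : ∑ i, η x i * L i (ghat x) =
        ∑ i, (η x i - ηhat x i) * L i (ghat x) + ∑ i, ηhat x i * L i (ghat x) := by
      rw [← Finset.sum_add_distrib]
      apply Finset.sum_congr rfl
      intros; ring
    have e2 : ∑ i, (η x i - ηhat x i) * L i (ghat x) + ∑ i, ηhat x i * L i (hstar x)
        = ∑ i, η x i * L i (hstar x)
          + ∑ i, (η x i - ηhat x i) * (L i (ghat x) - L i (hstar x)) := by
      rw [← Finset.sum_add_distrib, ← Finset.sum_add_distrib]
      apply Finset.sum_congr rfl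
      intros; ring
    have e3 : ∑ i, (η x i - ηhat x i) * (L i (ghat x) - L i (hstar x)) ≤
        ∑ i, |ηhat x i - η x i| := by
      apply Finset.sum_le_sum
      intro i _
      calc (η x i - ηhat x i) * (L i (ghat x) - L i (hstar x))
          ≤ |(η x i - ηhat x i) * (L i (ghat x) - L i (hstar x))| := le_abs_self _
        _ = |η x i - ηhat x i| * |L i (ghat x) - L i (hstar x)| := abs_mul _ _
        _ ≤ |η x i - ηhat x i| * 1 := by
            apply mul_le_mul_of_nonneg_left _ (abs_nonneg _)
            rw [abs_le]
            constructor <;>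
              linarith [(hLrange i (ghat x)).2, (hLrange i (hstar x)).2,
                (hLrange i (ghat x)).1, (hLrange i (hstar x)).1]
        _ = |ηhat x i - η x i| := by rw [mul_one, abs_sub_comm]
    linarith
  calc (∫ x, ∑ i, η x i * L i (ghat x) ∂μ)
      ≤ ∫ x, (∑ i, η x i * L i (hstar x) + ∑ i, |ηhat x i - η x i|) ∂μ :=
        integral_mono int1 (int2.add int3) key
    _ = _ := integral_add int2 int3
end
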